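/- In the category of sets, the action of a rigid multi-span is rigid: given sets A₁, …, A_n, C and a span C ←f– E –(g₁,…,g_n)→ A₁ × ⋯ × A_n such that the combined map (f, g₁, …, g_n) : E → C × A₁ × ⋯ × A_n is injective, the functor Set/A₁ × ⋯ × Set/A_n → Set/C sending (X₁,…,X_n) to f_! (g₁,…,g_n)* (X₁ × ⋯ × X_n) (external product over the product of bases, pulled back along (g₁,…,g_n), then postcomposed with f) has no natural automorphism other than the identity. -/

import Mathlib

open CategoryTheory

/-- The action of a multi-span `C ←f– E –(gᵢ)→ ∏ Aᵢ` on slice categories of sets: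
`(X₁,…,X_n) ↦ f_! (g₁,…,g_n)* (X₁ × ⋯ × X_n)`. -/
def multiSpanAction {ι : Type} (A : ι → Type) (C E : Type)
    (f : E → C) (g : ∀ i, E → A i) :
    (∀ i, Over (A i)) ⥤ Over C where
  obj X := Over.mk (show {p : E × (∀ i, (X i).left) // ∀ i, g i p.1 = (X i).hom (p.2 i)} ⟶ C
    from TypeCat.ofHom (fun p => f p.val.1))
  map {X Y} η := Over.homMk
    (TypeCat.ofHom (fun p => ⟨(p.val.1, fun i => (η i).left (p.val.2 i)), fun i => by
      have h := congrArg (fun k => k (p.val.2 i)) (Over.w (η i))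
      dsimp at h ⊢
      rw [h]
      exact p.property i⟩))
    rfl
  map_id X := by
    apply Over.OverMorphism.ext
    ext p
    rfl
  map_comp {X Y Z} η θ := by
    apply Over.OverMorphism.ext
    ext p
    rfl

/-- The action of a rigid multi-span on sets is rigid: if
`(f, g₁, …, g_n) : E → C × ∏ Aᵢ` is injective, then the functor
`Set/A₁ × ⋯ × Set/A_n ⥤ Set/C` above has no natural automorphism other than the
identity. -/
theorem stmt16 {ι : Type} (A : ι → Type) (C E : Type)
    (f : E → C) (g : ∀ i, E → A i)
    (hinj : Function.Injective (fun e => (f e, fun i => g i e) : E → C × ∀ i, A i))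
    (η : multiSpanAction A C E f g ≅ multiSpanAction A C E f g) :
    η = Iso.refl (multiSpanAction A C E f g) := by

  have key : ∀ (X : ∀ i, Over (A i)) (p : ((multiSpanAction A C E f g).obj X).left),
      (η.hom.app X).left p = p := by
    intro X p
    set e := p.val.1 with he
    set x := p.val.2 with hx
    -- the family of one-point objects over each A i
    let T : ∀ i, Over (A i) := fun i => Over.mk (TypeCat.ofHom (fun _ : PUnit.{1} => g i e))
    -- the map from T to X picking out x
    let θ : T ⟶ X := fun i => Over.homMk (TypeCat.ofHom (fun _ => x i))
      (by ext u; exact (p.property i).symm)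
    -- the canonical point of (multiSpanAction A C E f g).obj T
    let pT : ((multiSpanAction A C E f g).obj T).left := ⟨(e, fun _ => PUnit.unit), fun i => rfl⟩
    -- η is the identity at T
    have hT : (η.hom.app T).left pT = pT := by
      set q := (η.hom.app T).left pT with hq
      have hfq : f q.val.1 = f e := ConcreteCategory.congr_hom (Over.w (η.hom.app T)) pT
      have hgq : ∀ i, g i q.val.1 = g i e := fun i => q.property i
      have he' : q.val.1 = e := hinj (by
        dsimp only
        exact Prod.ext hfq (funext hgq))
      apply Subtype.ext
      apply Prod.ext he'
      funext i
      rfl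
    -- (multiSpanAction A C E f g).map θ sends pT to p
    have hmap : ((multiSpanAction A C E f g).map θ).left pT = p := rfl
    -- naturality
    have hnat := ConcreteCategory.congr_hom (congrArg CommaMorphism.left (η.hom.naturality θ)) pT
    simp only [Over.comp_left, types_comp_apply] at hnat
    calc (η.hom.app X).left p = (η.hom.app X).left (((multiSpanAction A C E f g).map θ).left pT) := by rw [hmap]
      _ = ((multiSpanAction A C E f g).map θ).left ((η.hom.app T).left pT) := hnat
      _ = ((multiSpanAction A C E f g).map θ).left pT := by rw [hT]
      _ = p := hmap
  apply Iso.ext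
  apply NatTrans.ext
  funext X
  apply Over.OverMorphism.ext
  ext p
  exact key X p
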